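/- Let m ≥ 1, γ a primitive m-th root of unity in k, and φ_i(x) = 1 - γ^{-i-1} x^d. Then ∑_{j=0}^{m-1} γ^{-j} · (φ_0 ⋯ φ̂_{j-1} ⋯ φ_{m-1}) = m · x^{(m-1)d}, where the hat denotes omission of the factor φ_{j-1} (indices mod m), i.e. ∑_{j=0}^{m-1} γ^{-j} φ_j φ_{j+1} ⋯ φ_{j+m-2} = m x^{(m-1)d}. -/

import Mathlib

open Polynomial Finset

lemma aux_deriv_prod {R : Type*} [CommSemiring R] {ι : Type*} [DecidableEq ι]
    (s : Finset ι) (f : ι → Polynomial R) :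
    derivative (∏ i ∈ s, f i) =
      ∑ i ∈ s, (∏ j ∈ s.erase i, f j) * derivative (f i) := by
  rw [Finset.prod_eq_multiset_prod, Polynomial.derivative_prod]
  rw [Finset.sum]
  refine congrArg Multiset.sum (Multiset.map_congr rfl fun i hi => ?_)
  rw [Finset.prod_eq_multiset_prod, Finset.erase_val]

lemma aux_prod_one_sub {k : Type*} [Field k] (m : ℕ) (hm : 1 ≤ m) {δ : k}
    (hδ : IsPrimitiveRoot δ m) (b : k) :
    ∏ i ∈ range m, (1 - δ ^ i * b) = 1 - b ^ m := by
  have hδ0 : δ ≠ 0 := hδ.ne_zero (by omega)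
  set ε := δ⁻¹ with hε
  have hε' : IsPrimitiveRoot ε m := hδ.inv
  have hprod : ∀ t : k, t ^ m - 1 = ∏ i ∈ range m, (t - ε ^ i) := by
    intro t
    have h := X_pow_sub_C_eq_prod hε' hm (one_pow m)
    have h2 := congrArg (Polynomial.eval t) h
    simpa [eval_prod] using h2
  set P : k := ∏ i ∈ range m, δ ^ i with hP
  set Q : k := ∏ i ∈ range m, ε ^ i with hQ
  have h0 : (-1 : k) ^ m * Q = -1 := by
    have := hprod 0
    rw [zero_pow (by omega : m ≠ 0)] at this
    rw [hQ, show ((-1:k))^m = ∏ _i ∈ range m, (-1:k) by simp, ← Finset.prod_mul_distrib]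
    simp only [neg_one_mul]
    rw [show (∏ i ∈ range m, -ε ^ i) = ∏ i ∈ range m, ((0:k) - ε ^ i) by simp, ← this]
    ring
  have hPQ : P * Q = 1 := by
    rw [hP, hQ, ← Finset.prod_mul_distrib]
    have : ∀ i, δ ^ i * ε ^ i = 1 := by
      intro i; rw [hε, inv_pow, mul_inv_cancel₀ (pow_ne_zero _ hδ0)]
    simp [this]
  have hQ2 : Q * Q = 1 := by
    rw [hQ, Finset.prod_pow_eq_pow_sum, ← pow_add]
    have : (∑ i ∈ range m, i) + (∑ i ∈ range m, i) = m * (m - 1) := by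
      rw [← Finset.sum_range_id_mul_two m]; ring
    rw [this, pow_mul, hε'.pow_eq_one, one_pow]
  have key : P * (-1 : k) ^ m = -1 := by
    calc P * (-1 : k) ^ m = P * (-1 : k) ^ m * (Q * Q) := by rw [hQ2, mul_one]
      _ = (P * Q) * ((-1 : k) ^ m * Q) := by ring
      _ = 1 * (-1) := by rw [hPQ, h0]
      _ = -1 := one_mul _
  calc ∏ i ∈ range m, (1 - δ ^ i * b)
      = ∏ i ∈ range m, (δ ^ i * (ε ^ i - b)) := by
        refine Finset.prod_congr rfl fun i _ => ?_
        rw [hε, inv_pow, mul_sub, mul_inv_cancel₀ (pow_ne_zero _ hδ0)]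
    _ = P * ∏ i ∈ range m, (ε ^ i - b) := by rw [Finset.prod_mul_distrib]
    _ = P * ((-1 : k) ^ m * ∏ i ∈ range m, (b - ε ^ i)) := by
        congr 1
        rw [show ((-1:k))^m = ∏ _i ∈ range m, (-1:k) by simp, ← Finset.prod_mul_distrib]
        exact Finset.prod_congr rfl fun i _ => by ring
    _ = (P * (-1 : k) ^ m) * (b ^ m - 1) := by rw [← hprod b]; ring
    _ = 1 - b ^ m := by rw [key]; ring

/-- ∑_{j=0}^{m-1} γ^{-j} φ_j φ_{j+1} ⋯ φ_{j+m-2} = m x^{(m-1)d}. -/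
theorem stmt_1 {k : Type*} [Field k] [IsAlgClosed k] [CharZero k]
    (m d : ℕ) (hm : 1 ≤ m) (hd : 1 ≤ d) (γ : k) (hγ : IsPrimitiveRoot γ m) :
    ∑ j ∈ Finset.range m, Polynomial.C (γ ^ (-(j : ℤ))) *
      ∏ r ∈ Finset.range (m - 1),
        ((1 : Polynomial k) - Polynomial.C (γ ^ (-((j : ℤ) + (r : ℤ)) - 1)) * Polynomial.X ^ d)
      = (m : Polynomial k) * Polynomial.X ^ ((m - 1) * d) := by
  have hγ0 : γ ≠ 0 := hγ.ne_zero (by omega)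
  have hδ : IsPrimitiveRoot γ⁻¹ m := hγ.inv
  set δ : k := γ⁻¹ with hδdef
  have hz : ∀ a : ℕ, γ ^ (-(a : ℤ)) = δ ^ a := by
    intro a
    rw [zpow_neg, zpow_natCast, hδdef, inv_pow]
  set q : ℕ → Polynomial k := fun i => (1 : Polynomial k) - Polynomial.C (δ ^ i) * Polynomial.X ^ d
    with hqdef
  have hq_per : ∀ a : ℕ, q a = q (a % m) := by
    intro a
    simp only [hqdef]
    congr 2
    conv_lhs => rw [← Nat.div_add_mod a m]
    rw [pow_add, pow_mul, hδ.pow_eq_one, one_pow, one_mul]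
  have hq0 : ∀ i, q i ≠ 0 := by
    intro i h
    have := congrArg (fun p => Polynomial.coeff p 0) h
    simp only [hqdef, Polynomial.coeff_sub, Polynomial.coeff_one, Polynomial.coeff_C_mul,
      Polynomial.coeff_X_pow, Polynomial.coeff_zero] at this
    rw [if_pos trivial, if_neg (by omega : ¬ (0:ℕ) = d), mul_zero, sub_zero] at this
    exact one_ne_zero this
  -- shift lemma
  have hshift : ∀ j ∈ range m, ∏ r ∈ range (m - 1), q (j + r + 1) = ∏ i ∈ (range m).erase j, q i := by
    intro j hj
    rw [mem_range] at hj
    have hfull : ∏ r ∈ range m, q (j + r) = ∏ i ∈ range m, q i := by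
      refine Finset.prod_nbij' (fun r => (j + r) % m) (fun i => (i + (m - j)) % m) ?_ ?_ ?_ ?_ ?_
      · intro a _; exact mem_range.mpr (Nat.mod_lt _ (by omega))
      · intro a _; exact mem_range.mpr (Nat.mod_lt _ (by omega))
      · intro a ha
        rw [mem_range] at ha
        show ((j + a) % m + (m - j)) % m = a
        rw [Nat.mod_add_mod, show j + a + (m - j) = m + a by omega, Nat.add_mod_left,
          Nat.mod_eq_of_lt ha]
      · intro a ha
        rw [mem_range] at ha
        show (j + (a + (m - j)) % m) % m = a
        rw [Nat.add_mod_mod, show j + (a + (m - j)) = m + a by omega, Nat.add_mod_left,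
          Nat.mod_eq_of_lt ha]
      · intro a _; exact hq_per (j + a)
    have h1 : ∏ r ∈ range m, q (j + r) = (∏ r ∈ range (m - 1), q (j + r + 1)) * q j := by
      conv_lhs => rw [show m = (m - 1) + 1 by omega]
      rw [Finset.prod_range_succ' (fun r => q (j + r))]
      simp only [← add_assoc, Nat.add_zero]
    have h2 : ∏ i ∈ range m, q i = q j * ∏ i ∈ (range m).erase j, q i :=
      (Finset.mul_prod_erase _ _ (mem_range.mpr hj)).symm
    have := h1.symm.trans (hfull.trans h2)
    rw [mul_comm] at this
    exact mul_left_cancel₀ (hq0 j) this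
  -- the full product
  have hF : ∏ i ∈ range m, q i = 1 - Polynomial.X ^ (m * d) := by
    have : Infinite k := Infinite.of_injective _ (Nat.cast_injective (R := k))
    apply Polynomial.funext
    intro t
    simp only [hqdef, Polynomial.eval_prod, Polynomial.eval_sub, Polynomial.eval_one,
      Polynomial.eval_mul, Polynomial.eval_C, Polynomial.eval_pow, Polynomial.eval_X]
    rw [show m * d = d * m by ring, pow_mul]
    exact aux_prod_one_sub m hm hδ (t ^ d)
  -- differentiate
  have hder := aux_deriv_prod (range m) q
  rw [hF] at hder
  have hderq : ∀ i, Polynomial.derivative (q i)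
      = -(Polynomial.C (δ ^ i) * (Polynomial.C (d : k) * Polynomial.X ^ (d - 1))) := by
    intro i
    show Polynomial.derivative (1 - Polynomial.C (δ ^ i) * Polynomial.X ^ d) = _
    rw [Polynomial.derivative_sub, Polynomial.derivative_one, Polynomial.derivative_C_mul,
      Polynomial.derivative_X_pow, zero_sub]
  have hderF : Polynomial.derivative ((1 : Polynomial k) - Polynomial.X ^ (m * d))
      = -(Polynomial.C ((m * d : ℕ) : k) * Polynomial.X ^ (m * d - 1)) := by
    simp [Polynomial.derivative_X_pow]
  rw [hderF] at hder
  simp only [hderq] at hder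
  have hkey : ∑ i ∈ range m, (Polynomial.C (δ ^ i) * ∏ j ∈ (range m).erase i, q j) *
      (Polynomial.C (d : k) * Polynomial.X ^ (d - 1))
      = Polynomial.C ((m * d : ℕ) : k) * Polynomial.X ^ (m * d - 1) := by
    have := congrArg Neg.neg hder
    rw [neg_neg] at this
    rw [this, ← Finset.sum_neg_distrib]
    exact Finset.sum_congr rfl fun i _ => by ring
  -- cancel C d * X^(d-1)
  have hb : (Polynomial.C (d : k) * Polynomial.X ^ (d - 1) : Polynomial k) ≠ 0 := by
    apply mul_ne_zero
    · simpa using (by omega : d ≠ 0)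
    · exact pow_ne_zero _ Polynomial.X_ne_zero
  -- rewrite the goal
  have hLHS : ∑ j ∈ Finset.range m, Polynomial.C (γ ^ (-(j : ℤ))) *
      ∏ r ∈ Finset.range (m - 1),
        ((1 : Polynomial k) - Polynomial.C (γ ^ (-((j : ℤ) + (r : ℤ)) - 1)) * Polynomial.X ^ d)
      = ∑ j ∈ range m, Polynomial.C (δ ^ j) * ∏ i ∈ (range m).erase j, q i := by
    refine Finset.sum_congr rfl fun j hj => ?_
    rw [hz j, ← hshift j hj]
    congr 1
    refine Finset.prod_congr rfl fun r _ => ?_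
    rw [show (-((j : ℤ) + (r : ℤ)) - 1) = -(((j + r + 1 : ℕ) : ℤ)) by push_cast; ring, hz]
  rw [hLHS]
  apply mul_right_cancel₀ hb
  rw [Finset.sum_mul, hkey]
  rw [show ((m : Polynomial k)) = Polynomial.C ((m : ℕ) : k) by simp]
  rw [mul_assoc, mul_comm (Polynomial.X ^ ((m - 1) * d)), ← mul_assoc, ← mul_assoc,
    ← Polynomial.C_mul, ← Nat.cast_mul, mul_assoc, ← pow_add]
  congr 2
  have h1 : (m - 1) * d = m * d - d := by
    cases m with
    | zero => omega
    | succ m' => rw [Nat.succ_sub_one, Nat.succ_mul]; omega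
  have h2 : d ≤ m * d := Nat.le_mul_of_pos_left d (by omega)
  rw [h1]
  omega
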